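/- Assume R = DV is obtained by the lazy reduction of the cone filtration boundary matrix. Let (σ̄,τ̄) be a persistence pair of cone simplices with max σ = d > b = max τ (low R[τ̄] = σ̄). Then the relative cycle ẑ produced by Lift-Cycle(R[τ̄] ∩ K, (b,d), 0) is an apex representative in H(K̂[b,d)): [ẑ] lies neither in the image of H(K̂[b+1,d)) → H(K̂[b,d)) nor in the image of H(K̂[b,d+1)) → H(K̂[b,d)). -/

import Mathlib

open Finsupp
open scoped Classical

/-- A finite Δ-complex over a field `F`: each cell has a dimension, a boundary chain,
and an integer support interval `T(σ) = [tmin σ, tmax σ] ⊆ [0, n]`; whenever `σ` appears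
in `∂τ` one has `tmin σ < tmin τ < tmax τ < tmax σ`. -/
structure DeltaComplex (F : Type) [Field F] (n : ℤ) where
  Cell : Type
  deq : DecidableEq Cell
  fin : Fintype Cell
  dim : Cell → ℕ
  tmin : Cell → ℤ
  tmax : Cell → ℤ
  bdry : Cell → (Cell →₀ F)
  tmin_nonneg : ∀ σ, 0 ≤ tmin σ
  tmin_lt_tmax : ∀ σ, tmin σ < tmax σ
  tmax_le : ∀ σ, tmax σ ≤ n
  bdry_dim : ∀ τ σ, bdry τ σ ≠ 0 → dim σ + 1 = dim τ
  nest : ∀ τ σ, bdry τ σ ≠ 0 → tmin σ < tmin τ ∧ tmax τ < tmax σ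
  bdry_bdry : ∀ τ, ((bdry τ).sum fun σ a => a • bdry σ) = 0

attribute [instance] DeltaComplex.deq DeltaComplex.fin

variable {F : Type} [Field F] {n : ℤ}

/-- The boundary of a chain of `K`. -/
noncomputable def bd (K : DeltaComplex F n) (c : K.Cell →₀ F) : K.Cell →₀ F :=
  c.sum fun τ a => a • K.bdry τ

/-- A chain is supported on a set of cells. -/
def SuppOn {α β : Type} [Zero β] (c : α →₀ β) (S : α → Prop) : Prop :=
  ∀ x, c x ≠ 0 → S x

/-- Cells of the prism `K̂`: vertical cells `σ×{i}` and horizontal cells `σ×[i,i+1]`. -/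
inductive PCell (C : Type) where
  | vert : C → ℤ → PCell C
  | horiz : C → ℤ → PCell C
deriving DecidableEq

/-- Membership of a prism cell in the prism `K̂`. -/
def inPrism (K : DeltaComplex F n) : PCell K.Cell → Prop
  | .vert σ i => K.tmin σ ≤ i ∧ i ≤ K.tmax σ
  | .horiz σ i => K.tmin σ ≤ i ∧ i + 1 ≤ K.tmax σ

/-- Membership of a prism cell in the interlevel subcomplex `K̂_i^j` (cells `σ×T` with
`T ⊆ [i,j]`). -/
def inSub (K : DeltaComplex F n) (i j : ℤ) : PCell K.Cell → Prop
  | .vert σ t => (K.tmin σ ≤ t ∧ t ≤ K.tmax σ) ∧ i ≤ t ∧ t ≤ j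
  | .horiz σ t => (K.tmin σ ≤ t ∧ t + 1 ≤ K.tmax σ) ∧ i ≤ t ∧ t + 1 ≤ j

/-- The boundary of a single prism cell: `∂(τ×i) = (∂τ)×i` and
`∂(σ×[i,i+1]) = σ×(i+1) − σ×i − (∂σ)×[i,i+1]`. -/
noncomputable def pcellBd (K : DeltaComplex F n) : PCell K.Cell → (PCell K.Cell →₀ F)
  | .vert τ i => (K.bdry τ).sum fun σ a => Finsupp.single (PCell.vert σ i) a
  | .horiz σ i =>
      Finsupp.single (PCell.vert σ (i + 1)) 1 - Finsupp.single (PCell.vert σ i) 1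
        - (K.bdry σ).sum fun ρ a => Finsupp.single (PCell.horiz ρ i) a

/-- The boundary of a prism chain. -/
noncomputable def pbd (K : DeltaComplex F n) (c : PCell K.Cell →₀ F) : PCell K.Cell →₀ F :=
  c.sum fun x a => a • pcellBd K x

/-- `z` is a relative cycle of the pair of subcomplexes `(A, B)` of the prism. -/
def RelCycle (K : DeltaComplex F n) (A B : PCell K.Cell → Prop)
    (z : PCell K.Cell →₀ F) : Prop :=
  SuppOn z A ∧ SuppOn (pbd K z) B

/-- The homology class `[z] ∈ H(A,B)` lies in the image of the map
`H(A',B') → H(A,B)` induced by the inclusion of pairs `(A',B') ⊆ (A,B)`: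
there is a relative cycle `α` of `(A',B')` homologous to `z` within `(A,B)`. -/
def InImg (K : DeltaComplex F n) (A' B' A B : PCell K.Cell → Prop)
    (z : PCell K.Cell →₀ F) : Prop :=
  ∃ α β γ : PCell K.Cell →₀ F,
    RelCycle K A' B' α ∧ SuppOn β A ∧ SuppOn γ B ∧ z = α + pbd K β + γ

/-- The vertical prism chain `w × t`. -/
noncomputable def vchain (K : DeltaComplex F n) (w : K.Cell →₀ F) (t : ℤ) :
    PCell K.Cell →₀ F :=
  w.sum fun σ a => Finsupp.single (PCell.vert σ t) a

/-- A valid choice of times for Lift-Cycle: for every simplex `τ` of `z` with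
`T(τ) ∩ [b,d] ≠ ∅`, the chosen time satisfies `t τ ∈ T(τ) ∩ [b,d]`. -/
def ValidTimes (K : DeltaComplex F n) (z : K.Cell →₀ F) (b d : ℤ) (t : K.Cell → ℤ) : Prop :=
  ∀ τ, z τ ≠ 0 → K.tmin τ ≤ d → b ≤ K.tmax τ →
    K.tmin τ ≤ t τ ∧ t τ ≤ K.tmax τ ∧ b ≤ t τ ∧ t τ ≤ d

/-- The chain `ẑ` produced by `Lift-Cycle(z, (s,f), w₀)` with the choice of times `t`
(here `b = min s f`, `d = max s f`): the sum of the vertical cells `⟨τ,z⟩·(τ×t_τ)` over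
simplices `τ` of `z` with `T(τ) ∩ [b,d] ≠ ∅`, plus horizontal cells `σ×[k,k+1]`
(oriented from `s` to `f`) whose coefficient is the running sum
`⟨σ,w₀⟩ + Σ ⟨τ,z⟩·⟨σ,∂τ⟩` over the cofaces `τ` whose time `t_τ` has already been passed
when traversing from `s` to `f`. -/
noncomputable def liftCycle (K : DeltaComplex F n) (z : K.Cell →₀ F) (s f : ℤ)
    (w0 : K.Cell →₀ F) (t : K.Cell → ℤ) : PCell K.Cell →₀ F :=
  (∑ τ ∈ z.support.filter (fun τ => K.tmin τ ≤ max s f ∧ min s f ≤ K.tmax τ),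
      Finsupp.single (PCell.vert τ (t τ)) (z τ))
  + ∑ σ : K.Cell, ∑ k ∈ Finset.Icc (min s f) (max s f - 1),
      Finsupp.single (PCell.horiz σ k)
        ((if s ≤ f then (1 : F) else -1) *
          (w0 σ +
            ∑ τ ∈ z.support.filter (fun τ =>
                (K.tmin τ ≤ max s f ∧ min s f ≤ K.tmax τ) ∧
                  (if s ≤ f then t τ ≤ k else k + 1 ≤ t τ)),
              z τ * (K.bdry τ) σ))

/-- Cells of the cone `K̄ = ω ∗ K`: base simplices, the cone vertex `ω`,
and cone simplices `σ̄ = ω ∗ σ`. -/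
inductive CCell (C : Type) where
  | base : C → CCell C
  | omega : CCell C
  | cone : C → CCell C
deriving DecidableEq

/-- Boundary of a single cell of the cone `K̄`:
`∂σ` for base simplices, `0` for `ω`, and `∂(ω∗σ) = σ − ω∗∂σ` (minus `ω` when `σ` is a
vertex) for cone simplices. -/
noncomputable def ccellBd (K : DeltaComplex F n) : CCell K.Cell → (CCell K.Cell →₀ F)
  | .base σ => (K.bdry σ).sum fun ρ a => Finsupp.single (CCell.base ρ) a
  | .omega => 0
  | .cone σ =>
      Finsupp.single (CCell.base σ) 1
        - (K.bdry σ).sum (fun ρ a => Finsupp.single (CCell.cone ρ) a)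
        - (if K.dim σ = 0 then Finsupp.single CCell.omega 1 else 0)

/-- The boundary of a chain of the cone `K̄`. -/
noncomputable def cbd (K : DeltaComplex F n) (c : CCell K.Cell →₀ F) : CCell K.Cell →₀ F :=
  c.sum fun x a => a • ccellBd K x

/-- The restriction `c ∩ K` of a cone chain to the base simplices, as a chain in `K`. -/
noncomputable def basePart (K : DeltaComplex F n) (c : CCell K.Cell →₀ F) : K.Cell →₀ F :=
  c.sum fun x a =>
    match x with
    | .base σ => Finsupp.single σ a
    | .omega => 0
    | .cone _ => 0

/-- The restriction `c ∩ (K̄ − K)` of a cone chain to the cells not in the base. -/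
noncomputable def conePart (K : DeltaComplex F n) (c : CCell K.Cell →₀ F) :
    CCell K.Cell →₀ F :=
  c.sum fun x a =>
    match x with
    | .base _ => 0
    | .omega => Finsupp.single CCell.omega a
    | .cone ρ => Finsupp.single (CCell.cone ρ) a

/-- The order of the cells of `K̄` in the cone filtration: base simplices by increasing
`min σ`, then `ω`, then cone simplices by decreasing `max σ`, ties broken consistently
so that every prefix is a subcomplex. -/
structure ConeOrder (K : DeltaComplex F n) where
  pos : CCell K.Cell → ℕ
  inj : Function.Injective pos
  base_lt_base : ∀ σ τ : K.Cell, K.tmin σ < K.tmin τ → pos (.base σ) < pos (.base τ)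
  base_lt_omega : ∀ σ : K.Cell, pos (.base σ) < pos .omega
  omega_lt_cone : ∀ σ : K.Cell, pos .omega < pos (.cone σ)
  cone_lt_cone : ∀ σ τ : K.Cell, K.tmax τ < K.tmax σ → pos (.cone σ) < pos (.cone τ)
  faces_first : ∀ x y, (ccellBd K x) y ≠ 0 → pos y < pos x

/-- `σ` is the pivot (lowest nonzero entry) of the column (chain) `c`. -/
def IsLow (K : DeltaComplex F n) (O : ConeOrder K) (c : CCell K.Cell →₀ F)
    (σ : CCell K.Cell) : Prop :=
  c σ ≠ 0 ∧ ∀ ρ, c ρ ≠ 0 → O.pos ρ ≤ O.pos σ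

/-- `R = DV` is a decomposition of the boundary matrix `D` of the cone filtration:
`V` is invertible upper-triangular and `R` is reduced (pivots of nonzero columns lie
in pairwise distinct rows). -/
structure IsReduction (K : DeltaComplex F n) (O : ConeOrder K)
    (R V : CCell K.Cell → (CCell K.Cell →₀ F)) : Prop where
  rdv : ∀ τ, R τ = cbd K (V τ)
  upper : ∀ τ ρ, (V τ) ρ ≠ 0 → O.pos ρ ≤ O.pos τ
  diag : ∀ τ, (V τ) τ ≠ 0
  reduced : ∀ τ τ' σ, τ ≠ τ' → IsLow K O (R τ) σ → ¬ IsLow K O (R τ') σ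

/-- One run of the lazy (standard left-to-right) reduction of the column of `τ`:
starting from a column `c` (with coefficient vector `v`), while the column is nonzero
and its pivot collides with the pivot of an earlier (already reduced) column, subtract
the appropriate scalar multiple of that column. -/
inductive LazyReduces (K : DeltaComplex F n) (O : ConeOrder K)
    (R V : CCell K.Cell → (CCell K.Cell →₀ F)) (τ : CCell K.Cell) :
    (CCell K.Cell →₀ F) → (CCell K.Cell →₀ F) →
      (CCell K.Cell →₀ F) → (CCell K.Cell →₀ F) → Prop
  | done (c v : CCell K.Cell →₀ F)
      (h : ∀ σ, IsLow K O c σ → ∀ τ', O.pos τ' < O.pos τ → ¬ IsLow K O (R τ') σ) :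
      LazyReduces K O R V τ c v c v
  | step (c v c' v' : CCell K.Cell →₀ F) (τ' σ : CCell K.Cell)
      (hlt : O.pos τ' < O.pos τ) (hc : IsLow K O c σ) (hr : IsLow K O (R τ') σ)
      (next : LazyReduces K O R V τ (c - (c σ / ((R τ') σ)) • R τ')
        (v - (c σ / ((R τ') σ)) • V τ') c' v') :
      LazyReduces K O R V τ c v c' v'

/-- `R = DV` is obtained by the lazy reduction: every column `R τ` (with coefficient
column `V τ`) is the result of the lazy reduction of the boundary column of `τ`,
columns being processed from left to right. -/
def IsLazyReduction (K : DeltaComplex F n) (O : ConeOrder K)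
    (R V : CCell K.Cell → (CCell K.Cell →₀ F)) : Prop :=
  ∀ τ, LazyReduces K O R V τ (ccellBd K τ) (Finsupp.single τ 1) (R τ) (V τ)

/-! ### Auxiliary machinery -/

section Aux

/-- Linear extension of a map on cells to chains. -/
noncomputable def extC {X Y : Type} (f : X → (Y →₀ F)) : (X →₀ F) →ₗ[F] (Y →₀ F) :=
  Finsupp.lsum F fun x => LinearMap.smulRight (LinearMap.id : F →ₗ[F] F) (f x)

lemma extC_apply {X Y : Type} (f : X → (Y →₀ F)) (c : X →₀ F) :
    extC f c = c.sum fun x a => a • f x := rfl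

lemma extC_single {X Y : Type} (f : X → (Y →₀ F)) (x : X) (a : F) :
    extC f (Finsupp.single x a) = a • f x := by
  rw [extC_apply, Finsupp.sum_single_index]; simp

lemma extC_eval {X Y : Type} (f : X → (Y →₀ F)) (c : X →₀ F) (y : Y) :
    extC f c y = ∑ x ∈ c.support, c x * (f x) y := by
  rw [extC_apply, Finsupp.sum_apply]
  rfl

lemma extC_support {X Y : Type} (f : X → (Y →₀ F)) (c : X →₀ F) (y : Y)
    (h : extC f c y ≠ 0) : ∃ x, c x ≠ 0 ∧ (f x) y ≠ 0 := by
  rw [extC_eval] at h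
  obtain ⟨x, hx, hne⟩ := Finset.exists_ne_zero_of_sum_ne_zero h
  exact ⟨x, Finsupp.mem_support_iff.mp hx, fun h0 => hne (by rw [h0, mul_zero])⟩

lemma bd_eq (K : DeltaComplex F n) (c : K.Cell →₀ F) : bd K c = extC K.bdry c := rfl

lemma pbd_eq (K : DeltaComplex F n) (c : PCell K.Cell →₀ F) :
    pbd K c = extC (pcellBd K) c := rfl

lemma cbd_eq (K : DeltaComplex F n) (c : CCell K.Cell →₀ F) :
    cbd K c = extC (ccellBd K) c := rfl

/-- The base-restriction as an `extC`. -/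
lemma basePart_eq (K : DeltaComplex F n) (c : CCell K.Cell →₀ F) :
    basePart K c = extC (fun x => match x with
      | CCell.base σ => Finsupp.single σ (1 : F)
      | CCell.omega => 0
      | CCell.cone _ => 0) c := by
  rw [basePart, extC_apply]
  apply Finsupp.sum_congr
  intro x _
  cases x with
  | base σ => simp [Finsupp.smul_single]
  | omega => simp
  | cone ρ => simp

/-- Inclusion of base chains into cone chains. -/
noncomputable def baseOf (K : DeltaComplex F n) : (K.Cell →₀ F) →ₗ[F] (CCell K.Cell →₀ F) :=
  extC fun ρ => Finsupp.single (CCell.base ρ) 1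

/-- The cone over a base chain. -/
noncomputable def coneOf (K : DeltaComplex F n) : (K.Cell →₀ F) →ₗ[F] (CCell K.Cell →₀ F) :=
  extC fun ρ => Finsupp.single (CCell.cone ρ) 1

/-- The `ω`-correction term. -/
noncomputable def omegaOf (K : DeltaComplex F n) : (K.Cell →₀ F) →ₗ[F] (CCell K.Cell →₀ F) :=
  extC fun ρ => if K.dim ρ = 0 then Finsupp.single CCell.omega 1 else 0

/-- Extract the cone part of a cone chain as a base chain. -/
noncomputable def conePull (K : DeltaComplex F n) :
    (CCell K.Cell →₀ F) →ₗ[F] (K.Cell →₀ F) :=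
  extC fun x => match x with
    | CCell.base _ => 0
    | CCell.omega => 0
    | CCell.cone ρ => Finsupp.single ρ 1

/-- The projection from prism chains to base chains (`σ×i ↦ σ`, horizontal `↦ 0`). -/
noncomputable def projL (K : DeltaComplex F n) :
    (PCell K.Cell →₀ F) →ₗ[F] (K.Cell →₀ F) :=
  extC fun x => match x with
    | PCell.vert ρ _ => Finsupp.single ρ 1
    | PCell.horiz _ _ => 0

lemma coneOf_apply_cone (K : DeltaComplex F n) (w : K.Cell →₀ F) (ρ : K.Cell) :
    coneOf K w (CCell.cone ρ) = w ρ := by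
  rw [coneOf, extC_eval]
  rw [Finset.sum_eq_single ρ]
  · by_cases h : ρ ∈ w.support
    · simp
    · simp [Finsupp.notMem_support_iff.mp h]
  · intro x _ hx
    simp [Finsupp.single_apply, hx]
  · intro h
    simp [Finsupp.notMem_support_iff.mp h]

lemma conePull_apply (K : DeltaComplex F n) (c : CCell K.Cell →₀ F) (ρ : K.Cell) :
    conePull K c ρ = c (CCell.cone ρ) := by
  rw [conePull, extC_eval]
  rw [Finset.sum_eq_single (CCell.cone ρ)]
  · by_cases h : CCell.cone ρ ∈ c.support
    · simp
    · simp [Finsupp.notMem_support_iff.mp h]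
  · intro x _ hx
    cases x with
    | base _ => simp
    | omega => simp
    | cone ρ' =>
        have : ρ' ≠ ρ := fun h => hx (by rw [h])
        simp [Finsupp.single_apply, this]
  · intro h
    simp [Finsupp.notMem_support_iff.mp h]

lemma coneOf_support (K : DeltaComplex F n) (w : K.Cell →₀ F) (x : CCell K.Cell)
    (h : coneOf K w x ≠ 0) : ∃ ρ, x = CCell.cone ρ ∧ w ρ ≠ 0 := by
  obtain ⟨ρ, hρ, hne⟩ := extC_support _ w x h
  refine ⟨ρ, ?_, hρ⟩
  by_contra hne'
  exact hne (by rw [Finsupp.single_apply]; simp [Ne.symm hne'])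

lemma baseOf_support (K : DeltaComplex F n) (w : K.Cell →₀ F) (x : CCell K.Cell)
    (h : baseOf K w x ≠ 0) : ∃ ρ, x = CCell.base ρ ∧ w ρ ≠ 0 := by
  obtain ⟨ρ, hρ, hne⟩ := extC_support _ w x h
  refine ⟨ρ, ?_, hρ⟩
  by_contra hne'
  exact hne (by rw [Finsupp.single_apply]; simp [Ne.symm hne'])

lemma omegaOf_support (K : DeltaComplex F n) (w : K.Cell →₀ F) (x : CCell K.Cell)
    (h : omegaOf K w x ≠ 0) : x = CCell.omega := by
  obtain ⟨ρ, _, hne⟩ := extC_support _ w x h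
  by_cases hd : K.dim ρ = 0
  · rw [if_pos hd, Finsupp.single_apply] at hne
    by_contra hx
    simp [Ne.symm hx] at hne
  · rw [if_neg hd] at hne; simp at hne

lemma bd_single (K : DeltaComplex F n) (x : K.Cell) (a : F) :
    bd K (Finsupp.single x a) = a • K.bdry x := by
  rw [bd_eq, extC_single]

lemma cbd_single (K : DeltaComplex F n) (x : CCell K.Cell) (a : F) :
    cbd K (Finsupp.single x a) = a • ccellBd K x := by
  rw [cbd_eq, extC_single]

lemma pbd_single (K : DeltaComplex F n) (x : PCell K.Cell) (a : F) :
    pbd K (Finsupp.single x a) = a • pcellBd K x := by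
  rw [pbd_eq, extC_single]

lemma coneOf_single (K : DeltaComplex F n) (x : K.Cell) (a : F) :
    coneOf K (Finsupp.single x a) = Finsupp.single (CCell.cone x) a := by
  rw [coneOf, extC_single, Finsupp.smul_single, smul_eq_mul, mul_one]

lemma baseOf_single (K : DeltaComplex F n) (x : K.Cell) (a : F) :
    baseOf K (Finsupp.single x a) = Finsupp.single (CCell.base x) a := by
  rw [baseOf, extC_single, Finsupp.smul_single, smul_eq_mul, mul_one]

lemma omegaOf_single (K : DeltaComplex F n) (x : K.Cell) (a : F) :
    omegaOf K (Finsupp.single x a)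
      = a • (if K.dim x = 0 then Finsupp.single CCell.omega (1:F) else 0) := by
  rw [omegaOf, extC_single]

lemma coneOf_eq_sum (K : DeltaComplex F n) (w : K.Cell →₀ F) :
    coneOf K w = w.sum fun σ c => Finsupp.single (CCell.cone σ) c := by
  rw [coneOf, extC_apply]
  apply Finsupp.sum_congr
  intro x _
  rw [Finsupp.smul_single, smul_eq_mul, mul_one]

lemma baseOf_eq_sum (K : DeltaComplex F n) (w : K.Cell →₀ F) :
    baseOf K w = w.sum fun σ c => Finsupp.single (CCell.base σ) c := by
  rw [baseOf, extC_apply]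
  apply Finsupp.sum_congr
  intro x _
  rw [Finsupp.smul_single, smul_eq_mul, mul_one]

lemma ccellBd_cone_eq (K : DeltaComplex F n) (x : K.Cell) :
    ccellBd K (CCell.cone x)
      = Finsupp.single (CCell.base x) 1 - coneOf K (K.bdry x)
        - (if K.dim x = 0 then Finsupp.single CCell.omega 1 else 0) := by
  rw [ccellBd, coneOf_eq_sum]

lemma ccellBd_base_eq (K : DeltaComplex F n) (x : K.Cell) :
    ccellBd K (CCell.base x) = baseOf K (K.bdry x) := by
  rw [ccellBd, baseOf_eq_sum]

/-- `∂∂ = 0` in `K`. -/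
lemma bd_bd (K : DeltaComplex F n) (c : K.Cell →₀ F) : bd K (bd K c) = 0 := by
  rw [bd_eq, bd_eq]
  induction c using Finsupp.induction with
  | zero => simp
  | single_add x a c _ _ ih =>
      rw [map_add, map_add, ih, add_zero, extC_single, map_smul]
      have : extC K.bdry (K.bdry x) = 0 := by
        rw [extC_apply]; exact K.bdry_bdry x
      rw [this, smul_zero]

/-- `∂(ω∗w) = w − ω∗∂w − ε(w)·ω`. -/
lemma cbd_coneOf (K : DeltaComplex F n) (w : K.Cell →₀ F) :
    cbd K (coneOf K w) = baseOf K w - coneOf K (bd K w) - omegaOf K w := by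
  have h : (extC (ccellBd K)).comp (coneOf K)
      = baseOf K - (coneOf K).comp (extC K.bdry) - omegaOf K := by
    apply Finsupp.lhom_ext
    intro x a
    simp only [LinearMap.comp_apply, LinearMap.sub_apply]
    rw [coneOf_single, extC_single, ccellBd_cone_eq, baseOf_single]
    rw [smul_sub, smul_sub, Finsupp.smul_single, smul_eq_mul, mul_one]
    congr 1
    · congr 1
      rw [← bd_eq, bd_single, map_smul]
    · rw [omegaOf_single]
  have := LinearMap.congr_fun h w
  simp only [LinearMap.comp_apply, LinearMap.sub_apply] at this
  rw [cbd_eq, this, bd_eq]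

/-- `∂` of a base chain is the base of `∂`. -/
lemma cbd_baseOf (K : DeltaComplex F n) (w : K.Cell →₀ F) :
    cbd K (baseOf K w) = baseOf K (bd K w) := by
  have h : (extC (ccellBd K)).comp (baseOf K) = (baseOf K).comp (extC K.bdry) := by
    apply Finsupp.lhom_ext
    intro x a
    simp only [LinearMap.comp_apply]
    rw [baseOf_single, extC_single, ccellBd_base_eq, ← bd_eq, bd_single, map_smul]
  have := LinearMap.congr_fun h w
  simp only [LinearMap.comp_apply] at this
  rw [cbd_eq, this, bd_eq]

lemma projL_single_vert (K : DeltaComplex F n) (ρ : K.Cell) (i : ℤ) (a : F) :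
    projL K (Finsupp.single (PCell.vert ρ i) a) = Finsupp.single ρ a := by
  rw [projL, extC_single, Finsupp.smul_single, smul_eq_mul, mul_one]

lemma projL_single_horiz (K : DeltaComplex F n) (ρ : K.Cell) (i : ℤ) (a : F) :
    projL K (Finsupp.single (PCell.horiz ρ i) a) = 0 := by
  rw [projL, extC_single, smul_zero]

/-- `projL` is a chain map. -/
lemma projL_pbd (K : DeltaComplex F n) (c : PCell K.Cell →₀ F) :
    projL K (pbd K c) = bd K (projL K c) := by
  have h : (projL K).comp (extC (pcellBd K)) = (extC K.bdry).comp (projL K) := by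
    apply Finsupp.lhom_ext
    intro x a
    simp only [LinearMap.comp_apply]
    rw [extC_single, map_smul]
    cases x with
    | vert ρ i =>
        rw [projL_single_vert, ← bd_eq, bd_single, pcellBd]
        congr 1
        rw [map_finsuppSum]
        conv_rhs => rw [← Finsupp.sum_single (K.bdry ρ)]
        apply Finsupp.sum_congr
        intro σ _
        exact projL_single_vert K σ i _
    | horiz ρ i =>
        rw [projL_single_horiz, map_zero, pcellBd, map_sub, map_sub]
        rw [projL_single_vert, projL_single_vert]
        have h2 : projL K ((K.bdry ρ).sum fun σ c => Finsupp.single (PCell.horiz σ i) c)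
            = 0 := by
          rw [map_finsuppSum]
          apply Finset.sum_eq_zero
          intro σ _
          exact projL_single_horiz K σ i _
        rw [h2, sub_zero, sub_self, smul_zero]
  have := LinearMap.congr_fun h c
  simp only [LinearMap.comp_apply] at this
  rw [pbd_eq, this, bd_eq]

section Reduction

variable (K : DeltaComplex F n) (O : ConeOrder K)
variable (R V : CCell K.Cell → (CCell K.Cell →₀ F))

/-- Every nonzero chain has a pivot. -/
lemma exists_low (c : CCell K.Cell →₀ F) (hc : c ≠ 0) : ∃ ς, IsLow K O c ς := by
  obtain ⟨ς, hmem, hmax⟩ := Finset.exists_max_image c.support O.pos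
    (Finsupp.support_nonempty_iff.mpr hc)
  exact ⟨ς, Finsupp.mem_support_iff.mp hmem,
    fun ρ hρ => hmax ρ (Finsupp.mem_support_iff.mpr hρ)⟩

/-- Columns of base cells only involve base cells. -/
lemma R_base_supp (hRV : IsReduction K O R V) (ρ : K.Cell) (x : CCell K.Cell) (h : R (CCell.base ρ) x ≠ 0) :
    ∃ ρ', x = CCell.base ρ' := by
  rw [hRV.rdv, cbd_eq] at h
  obtain ⟨y, hy, hne⟩ := extC_support _ _ _ h
  have hpos := hRV.upper (CCell.base ρ) y hy
  cases y with
  | base ρ'' =>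
      rw [ccellBd_base_eq] at hne
      obtain ⟨ρ', hρ', _⟩ := baseOf_support K _ _ hne
      exact ⟨ρ', hρ'⟩
  | omega =>
      exact absurd hpos (not_le.mpr (O.base_lt_omega ρ))
  | cone ρ'' =>
      exact absurd (lt_trans (lt_of_le_of_lt hpos (O.base_lt_omega ρ))
        (O.omega_lt_cone ρ'')) (lt_irrefl _)

/-- The column of `ω` only involves base cells. -/
lemma R_omega_supp (hRV : IsReduction K O R V) (x : CCell K.Cell) (h : R CCell.omega x ≠ 0) :
    ∃ ρ', x = CCell.base ρ' := by
  rw [hRV.rdv, cbd_eq] at h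
  obtain ⟨y, hy, hne⟩ := extC_support _ _ _ h
  have hpos := hRV.upper CCell.omega y hy
  cases y with
  | base ρ'' =>
      rw [ccellBd_base_eq] at hne
      obtain ⟨ρ', hρ', _⟩ := baseOf_support K _ _ hne
      exact ⟨ρ', hρ'⟩
  | omega => rw [ccellBd] at hne; simp at hne
  | cone ρ'' =>
      exact absurd (lt_of_lt_of_le (O.omega_lt_cone ρ'') hpos) (lt_irrefl _)

/-- Along a lazy reduction, the support of the column never grows in position. -/
lemma lazy_supp {τ₀ : CCell K.Cell} {c v c' v' : CCell K.Cell →₀ F}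
    (h : LazyReduces K O R V τ₀ c v c' v') (N : ℕ)
    (hc : ∀ x, c x ≠ 0 → O.pos x ≤ N) : ∀ x, c' x ≠ 0 → O.pos x ≤ N := by
  induction h with
  | done c v _ => exact hc
  | step c v c' v' τ'' σ₀ hlt hlow' hr next ih =>
      apply ih
      intro x hx
      rw [Finsupp.sub_apply] at hx
      by_cases h1 : c x ≠ 0
      · exact hc x h1
      · push_neg at h1
        rw [h1, zero_sub, neg_ne_zero, Finsupp.smul_apply, smul_eq_mul] at hx
        have hRx : R τ'' x ≠ 0 := fun h0 => hx (by rw [h0, mul_zero])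
        exact le_trans (hr.2 x hRx) (hc σ₀ hlow'.1)

/-- Along the lazy reduction of a cone column whose final pivot is a cone cell, the
coefficient column stays supported on cone cells. -/
lemma lazy_cone_V (hRV : IsReduction K O R V) (ρ ς : K.Cell)
    (IH : ∀ τ'', O.pos τ'' < O.pos (CCell.cone ρ) →
      ∀ ς', IsLow K O (R τ'') (CCell.cone ς') →
        ∀ x, V τ'' x ≠ 0 → ∃ ρ', x = CCell.cone ρ') :
    ∀ c v c' v', LazyReduces K O R V (CCell.cone ρ) c v c' v' →
      IsLow K O c' (CCell.cone ς) →
      (∀ x, v x ≠ 0 → ∃ ρ', x = CCell.cone ρ') →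
      ∀ x, v' x ≠ 0 → ∃ ρ', x = CCell.cone ρ' := by
  intro c v c' v' h
  induction h with
  | done c v _ => exact fun hlow hv => hv
  | step c v c' v' τ'' σ₀ hlt hlowc hr next ih =>
      intro hlow hv
      -- the final pivot bounds every intermediate support
      have hbound : ∀ x, c' x ≠ 0 → O.pos x ≤ O.pos σ₀ := by
        apply lazy_supp K O R V next
        intro x hx
        rw [Finsupp.sub_apply] at hx
        by_cases h1 : c x ≠ 0
        · exact hlowc.2 x h1
        · push_neg at h1
          rw [h1, zero_sub, neg_ne_zero, Finsupp.smul_apply, smul_eq_mul] at hx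
          have hRx : R τ'' x ≠ 0 := fun h0 => hx (by rw [h0, mul_zero])
          exact hr.2 x hRx
      have hςσ : O.pos (CCell.cone ς) ≤ O.pos σ₀ := hbound _ hlow.1
      -- the current pivot is a cone cell
      obtain ⟨ς₀, rfl⟩ : ∃ ς₀, σ₀ = CCell.cone ς₀ := by
        cases σ₀ with
        | base ρ₀ =>
            exact absurd hςσ (not_le.mpr (lt_trans (O.base_lt_omega ρ₀)
              (O.omega_lt_cone ς))).elim
        | omega => exact absurd hςσ (not_le.mpr (O.omega_lt_cone ς)).elim
        | cone ς₀ => exact ⟨ς₀, rfl⟩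
      -- the subtracted column is a cone column
      obtain ⟨ρ'', rfl⟩ : ∃ ρ'', τ'' = CCell.cone ρ'' := by
        cases τ'' with
        | base ρ₀ =>
            obtain ⟨ρ', hρ'⟩ := R_base_supp K O R V hRV ρ₀ _ hr.1
            exact absurd hρ' (by simp)
        | omega =>
            obtain ⟨ρ', hρ'⟩ := R_omega_supp K O R V hRV _ hr.1
            exact absurd hρ' (by simp)
        | cone ρ'' => exact ⟨ρ'', rfl⟩
      have hV := IH _ hlt ς₀ hr
      apply ih hlow
      intro x hx
      rw [Finsupp.sub_apply] at hx
      by_cases h1 : v x ≠ 0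
      · exact hv x h1
      · push_neg at h1
        rw [h1, zero_sub, neg_ne_zero, Finsupp.smul_apply, smul_eq_mul] at hx
        exact hV x fun h0 => hx (by rw [h0, mul_zero])

/-- If the pivot of a lazily-reduced cone column is a cone cell, its coefficient column
is supported on cone cells. -/
lemma V_cone_supp (hRV : IsReduction K O R V) (hlazy : IsLazyReduction K O R V) :
    ∀ N : ℕ, ∀ ρ : K.Cell, O.pos (CCell.cone ρ) = N →
    ∀ ς, IsLow K O (R (CCell.cone ρ)) (CCell.cone ς) →
      ∀ x, V (CCell.cone ρ) x ≠ 0 → ∃ ρ', x = CCell.cone ρ' := by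
  intro N
  induction N using Nat.strong_induction_on with
  | _ N ihN =>
      intro ρ hN ς hlow x hx
      refine lazy_cone_V K O R V hRV ρ ς ?_ _ _ _ _ (hlazy (CCell.cone ρ)) hlow ?_ x hx
      · intro τ'' hlt ς' hlow' y hy
        cases τ'' with
        | base ρ₀ =>
            obtain ⟨ρ', hρ'⟩ := R_base_supp K O R V hRV ρ₀ _ hlow'.1
            exact absurd hρ' (by simp)
        | omega =>
            obtain ⟨ρ', hρ'⟩ := R_omega_supp K O R V hRV _ hlow'.1
            exact absurd hρ' (by simp)
        | cone ρ'' =>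
            exact ihN (O.pos (CCell.cone ρ'')) (hN ▸ hlt) ρ'' rfl ς' hlow' y hy
      · intro y hy
        rw [Finsupp.single_apply] at hy
        by_cases h : CCell.cone ρ = y
        · exact ⟨ρ, h.symm⟩
        · rw [if_neg h] at hy; exact absurd rfl hy

/-- Span lemma: the boundary of any chain supported before position `N` is a linear
combination of the reduced columns before `N`; in particular its pivot is the pivot of
one of them. -/
lemma span_low (hRV : IsReduction K O R V) : ∀ N : ℕ, ∀ c₀ : CCell K.Cell →₀ F,
    (∀ x, c₀ x ≠ 0 → O.pos x < N) →
    cbd K c₀ = 0 ∨ ∃ τ' ς, O.pos τ' < N ∧ IsLow K O (R τ') ς ∧ IsLow K O (cbd K c₀) ς := by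
  intro N
  induction N using Nat.strong_induction_on with
  | _ N ihN =>
      intro c₀ hsupp
      by_cases hc0 : c₀ = 0
      · left; rw [hc0, cbd_eq, map_zero]
      obtain ⟨τ₁, hτ₁mem, hτ₁max⟩ := Finset.exists_max_image c₀.support O.pos
        (Finsupp.support_nonempty_iff.mpr hc0)
      have hτ₁ : c₀ τ₁ ≠ 0 := Finsupp.mem_support_iff.mp hτ₁mem
      have hτ₁N : O.pos τ₁ < N := hsupp τ₁ hτ₁
      set q : F := c₀ τ₁ / V τ₁ τ₁ with hq
      set c₁ : CCell K.Cell →₀ F := c₀ - q • V τ₁ with hc₁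
      have hc₁τ₁ : c₁ τ₁ = 0 := by
        rw [hc₁, Finsupp.sub_apply, Finsupp.smul_apply, smul_eq_mul, hq,
          div_mul_cancel₀ _ (hRV.diag τ₁), sub_self]
      have hc₁supp : ∀ x, c₁ x ≠ 0 → O.pos x < O.pos τ₁ := by
        intro x hx
        have hxτ₁ : x ≠ τ₁ := fun h => hx (h ▸ hc₁τ₁)
        have hle : O.pos x ≤ O.pos τ₁ := by
          rw [hc₁, Finsupp.sub_apply] at hx
          by_cases h1 : c₀ x ≠ 0
          · exact hτ₁max x (Finsupp.mem_support_iff.mpr h1)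
          · push_neg at h1
            rw [h1, zero_sub, neg_ne_zero, Finsupp.smul_apply, smul_eq_mul] at hx
            exact hRV.upper τ₁ x fun h0 => hx (by rw [h0, mul_zero])
        exact lt_of_le_of_ne hle fun h => hxτ₁ (O.inj h)
      have hsplit : cbd K c₀ = cbd K c₁ + q • R τ₁ := by
        rw [hc₁, cbd_eq, cbd_eq, map_sub, map_smul, ← cbd_eq, ← cbd_eq, ← hRV.rdv,
          sub_add_cancel]
      by_cases hqR : q • R τ₁ = 0
      · rw [hsplit, hqR, add_zero]
        rcases ihN (O.pos τ₁) hτ₁N c₁ hc₁supp with h | ⟨τ', ς, h1, h2, h3⟩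
        · left; exact h
        · right; exact ⟨τ', ς, lt_trans h1 hτ₁N, h2, h3⟩
      · have hqne : q ≠ 0 := fun h => hqR (by rw [h, zero_smul])
        have hR1 : R τ₁ ≠ 0 := fun h => hqR (by rw [h, smul_zero])
        obtain ⟨ς₁, hς₁⟩ := exists_low K O (R τ₁) hR1
        rcases ihN (O.pos τ₁) hτ₁N c₁ hc₁supp with h | ⟨τ', ς, h1, h2, h3⟩
        · right
          refine ⟨τ₁, ς₁, hτ₁N, hς₁, ?_⟩
          rw [hsplit, h, zero_add]
          constructor
          · rw [Finsupp.smul_apply, smul_eq_mul]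
            exact mul_ne_zero hqne hς₁.1
          · intro x hx
            rw [Finsupp.smul_apply, smul_eq_mul] at hx
            exact hς₁.2 x fun h0 => hx (by rw [h0, mul_zero])
        · right
          rcases lt_trichotomy (O.pos ς) (O.pos ς₁) with hlt | heq | hgt
          · -- new pivot wins
            refine ⟨τ₁, ς₁, hτ₁N, hς₁, ?_, ?_⟩
            · rw [hsplit, Finsupp.add_apply, Finsupp.smul_apply, smul_eq_mul]
              have : cbd K c₁ ς₁ = 0 := by
                by_contra hne
                exact absurd (h3.2 _ hne) (not_le.mpr hlt)
              rw [this, zero_add]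
              exact mul_ne_zero hqne hς₁.1
            · intro x hx
              rw [hsplit, Finsupp.add_apply, Finsupp.smul_apply, smul_eq_mul] at hx
              by_cases h1 : cbd K c₁ x ≠ 0
              · exact le_trans (h3.2 x h1) (le_of_lt hlt)
              · push_neg at h1
                rw [h1, zero_add] at hx
                exact hς₁.2 x fun h0 => hx (by rw [h0, mul_zero])
          · -- equal pivots: contradiction with reducedness
            have hςeq : ς = ς₁ := O.inj heq
            have hne : τ' ≠ τ₁ := fun h => absurd (h ▸ h1) (lt_irrefl _)
            exact absurd hς₁ (hςeq ▸ hRV.reduced τ' τ₁ ς hne h2)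
          · -- old pivot wins
            refine ⟨τ', ς, lt_trans h1 hτ₁N, h2, ?_, ?_⟩
            · rw [hsplit, Finsupp.add_apply, Finsupp.smul_apply, smul_eq_mul]
              have : R τ₁ ς = 0 := by
                by_contra hne
                exact absurd (hς₁.2 _ hne) (not_le.mpr hgt)
              rw [this, mul_zero, add_zero]
              exact h3.1
            · intro x hx
              rw [hsplit, Finsupp.add_apply, Finsupp.smul_apply, smul_eq_mul] at hx
              by_cases hA : cbd K c₁ x ≠ 0
              · exact h3.2 x hA
              · push_neg at hA
                rw [hA, zero_add] at hx
                exact le_trans (hς₁.2 x fun h0 => hx (by rw [h0, mul_zero]))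
                  (le_of_lt hgt)

end Reduction

end Aux

section Lift

variable (K : DeltaComplex F n)

lemma bd_bdry (τ' : K.Cell) : bd K (K.bdry τ') = 0 := by
  have h : K.bdry τ' = bd K (Finsupp.single τ' 1) := by rw [bd_single, one_smul]
  rw [h, bd_bd]

lemma bd_eval (w : K.Cell →₀ F) (ρ : K.Cell) :
    bd K w ρ = ∑ τ' ∈ w.support, w τ' * K.bdry τ' ρ := by
  rw [bd_eq, extC_eval]

lemma bd_eval_univ (w : K.Cell →₀ F) (ρ : K.Cell) :
    bd K w ρ = ∑ τ' : K.Cell, w τ' * K.bdry τ' ρ := by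
  rw [bd_eval]
  apply Finset.sum_subset (Finset.subset_univ _)
  intro τ' _ hτ'
  rw [Finsupp.notMem_support_iff.mp hτ', zero_mul]

lemma pcellBd_vert_apply_vert (τ' ρ : K.Cell) (i m : ℤ) :
    (pcellBd K (PCell.vert τ' i)) (PCell.vert ρ m) = if i = m then K.bdry τ' ρ else 0 := by
  rw [pcellBd, Finsupp.sum_apply, Finsupp.sum]
  have h : ∀ σ ∈ (K.bdry τ').support,
      (Finsupp.single (PCell.vert σ i) (K.bdry τ' σ)) (PCell.vert ρ m)
        = if σ = ρ then (if i = m then K.bdry τ' σ else 0) else 0 := by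
    intro σ _
    rw [Finsupp.single_apply]
    by_cases h1 : σ = ρ <;> by_cases h2 : i = m <;> simp [h1, h2]
  rw [Finset.sum_congr rfl h, Finset.sum_ite_eq']
  by_cases hρ : ρ ∈ (K.bdry τ').support
  · rw [if_pos hρ]
  · rw [if_neg hρ, Finsupp.notMem_support_iff.mp hρ]
    simp

lemma pcellBd_vert_apply_horiz (τ' ρ : K.Cell) (i m : ℤ) :
    (pcellBd K (PCell.vert τ' i)) (PCell.horiz ρ m) = 0 := by
  rw [pcellBd, Finsupp.sum_apply, Finsupp.sum]
  apply Finset.sum_eq_zero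
  intro σ _
  rw [Finsupp.single_apply, if_neg (by simp)]

lemma pcellBd_horiz_apply_vert (σ' ρ : K.Cell) (k m : ℤ) :
    (pcellBd K (PCell.horiz σ' k)) (PCell.vert ρ m)
      = (if σ' = ρ ∧ k + 1 = m then (1:F) else 0)
        - (if σ' = ρ ∧ k = m then (1:F) else 0) := by
  rw [pcellBd, Finsupp.sub_apply, Finsupp.sub_apply]
  have h3 : ((K.bdry σ').sum fun ρ' a => Finsupp.single (PCell.horiz ρ' k) a)
      (PCell.vert ρ m) = 0 := by
    rw [Finsupp.sum_apply, Finsupp.sum]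
    apply Finset.sum_eq_zero
    intro σ _
    rw [Finsupp.single_apply, if_neg (by simp)]
  rw [h3, sub_zero, Finsupp.single_apply, Finsupp.single_apply]
  congr 1 <;> simp [PCell.vert.injEq, eq_comm, and_comm]

lemma pcellBd_horiz_apply_horiz (σ' ρ : K.Cell) (k m : ℤ) :
    (pcellBd K (PCell.horiz σ' k)) (PCell.horiz ρ m)
      = -(if k = m then K.bdry σ' ρ else 0) := by
  rw [pcellBd, Finsupp.sub_apply, Finsupp.sub_apply]
  rw [Finsupp.single_apply, if_neg (by simp), Finsupp.single_apply, if_neg (by simp)]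
  rw [Finsupp.sum_apply, Finsupp.sum]
  have h : ∀ σ ∈ (K.bdry σ').support,
      (Finsupp.single (PCell.horiz σ k) (K.bdry σ' σ)) (PCell.horiz ρ m)
        = if σ = ρ then (if k = m then K.bdry σ' σ else 0) else 0 := by
    intro σ _
    rw [Finsupp.single_apply]
    by_cases h1 : σ = ρ <;> by_cases h2 : k = m <;> simp [h1, h2]
  rw [Finset.sum_congr rfl h, Finset.sum_ite_eq']
  by_cases hρ : ρ ∈ (K.bdry σ').support
  · rw [if_pos hρ]; ring
  · rw [if_neg hρ, Finsupp.notMem_support_iff.mp hρ]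
    simp

/-- Normal form of `liftCycle` when `b < d` and `w₀ = 0`. -/
lemma liftCycle_eq (z : K.Cell →₀ F) (b d : ℤ) (h : b < d) (t : K.Cell → ℤ) :
    liftCycle K z b d 0 t
      = (∑ τ' ∈ z.support.filter (fun τ' => K.tmin τ' ≤ d ∧ b ≤ K.tmax τ'),
          Finsupp.single (PCell.vert τ' (t τ')) (z τ'))
        + ∑ σ' : K.Cell, ∑ k ∈ Finset.Icc b (d - 1),
            Finsupp.single (PCell.horiz σ' k)
              (∑ τ' ∈ (z.support.filter
                    (fun τ' => K.tmin τ' ≤ d ∧ b ≤ K.tmax τ')).filter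
                      (fun τ' => t τ' ≤ k),
                z τ' * K.bdry τ' σ') := by
  have h1 : max b d = d := max_eq_right h.le
  have h2 : min b d = b := min_eq_left h.le
  have h3 : b ≤ d := h.le
  simp only [liftCycle, h1, h2, h3, if_true, Finsupp.coe_zero, Pi.zero_apply, zero_add,
    one_mul, Finset.filter_filter]

/-- The lifted chain is a relative cycle of `(K̂_b^{n+1}, K̂_d^{n+1})`. -/
lemma lift_relcycle (z : K.Cell →₀ F) (b d : ℤ) (hbd : b < d)
    (Hb : ∀ ρ, z ρ ≠ 0 → b ≤ K.tmax ρ)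
    (Hd : ∀ ρ, bd K z ρ ≠ 0 → d ≤ K.tmax ρ)
    (t : K.Cell → ℤ) (ht : ValidTimes K z b d t) :
    RelCycle K (inSub K b (n + 1)) (inSub K d (n + 1)) (liftCycle K z b d 0 t) := by
  classical
  set S : Finset K.Cell :=
    z.support.filter (fun τ' => K.tmin τ' ≤ d ∧ b ≤ K.tmax τ') with hS
  -- facts about members of S
  have hmemS : ∀ τ' ∈ S, z τ' ≠ 0 ∧ K.tmin τ' ≤ d ∧ b ≤ K.tmax τ' := by
    intro τ' hτ'
    rw [hS, Finset.mem_filter, Finsupp.mem_support_iff] at hτ'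
    exact ⟨hτ'.1, hτ'.2.1, hτ'.2.2⟩
  have htS : ∀ τ' ∈ S, K.tmin τ' ≤ t τ' ∧ t τ' ≤ K.tmax τ' ∧ b ≤ t τ' ∧ t τ' ≤ d := by
    intro τ' hτ'
    obtain ⟨h1, h2, h3⟩ := hmemS τ' hτ'
    exact ht τ' h1 h2 h3
  set C : K.Cell → ℤ → F :=
    fun σ' k => ∑ τ' ∈ S.filter (fun τ' => t τ' ≤ k), z τ' * K.bdry τ' σ' with hC
  have hzeq := liftCycle_eq K z b d hbd t
  rw [← hS] at hzeq
  set A : PCell K.Cell →₀ F :=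
    ∑ τ' ∈ S, Finsupp.single (PCell.vert τ' (t τ')) (z τ') with hA
  set B : PCell K.Cell →₀ F :=
    ∑ σ' : K.Cell, ∑ k ∈ Finset.Icc b (d - 1),
      Finsupp.single (PCell.horiz σ' k) (C σ' k) with hB
  have hzAB : liftCycle K z b d 0 t = A + B := hzeq
  -- rewrite C as a sum over S with indicator
  have hCind : ∀ σ' k, C σ' k = ∑ τ' ∈ S, (if t τ' ≤ k then z τ' * K.bdry τ' σ' else 0) := by
    intro σ' k
    rw [hC]
    exact Finset.sum_filter _ _
  constructor
  · -- support of ẑ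
    intro x hx
    rw [hzAB, Finsupp.add_apply] at hx
    cases x with
    | vert ρ m =>
        have hBx : B (PCell.vert ρ m) = 0 := by
          rw [hB, Finsupp.finset_sum_apply]
          apply Finset.sum_eq_zero
          intro σ' _
          rw [Finsupp.finset_sum_apply]
          apply Finset.sum_eq_zero
          intro k _
          rw [Finsupp.single_apply, if_neg (by simp)]
        rw [hBx, add_zero, hA, Finsupp.finset_sum_apply] at hx
        obtain ⟨τ', hτ'S, hne⟩ := Finset.exists_ne_zero_of_sum_ne_zero hx
        rw [Finsupp.single_apply] at hne
        have hkey : PCell.vert τ' (t τ') = PCell.vert ρ m := by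
          by_contra hk
          rw [if_neg hk] at hne
          exact hne rfl
        obtain ⟨rfl, rfl⟩ := (PCell.vert.injEq _ _ _ _).mp hkey
        obtain ⟨h1, h2, h3, h4⟩ := htS _ hτ'S
        have h5 : K.tmax τ' ≤ n := K.tmax_le τ'
        exact ⟨⟨h1, h2⟩, h3, by omega⟩
    | horiz ρ m =>
        have hAx : A (PCell.horiz ρ m) = 0 := by
          rw [hA, Finsupp.finset_sum_apply]
          apply Finset.sum_eq_zero
          intro τ' _
          rw [Finsupp.single_apply, if_neg (by simp)]
        rw [hAx, zero_add, hB, Finsupp.finset_sum_apply] at hx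
        obtain ⟨σ', _, hne1⟩ := Finset.exists_ne_zero_of_sum_ne_zero hx
        rw [Finsupp.finset_sum_apply] at hne1
        obtain ⟨k, hk, hne2⟩ := Finset.exists_ne_zero_of_sum_ne_zero hne1
        rw [Finsupp.single_apply] at hne2
        have hkey : PCell.horiz σ' k = PCell.horiz ρ m := by
          by_contra hkk
          rw [if_neg hkk] at hne2
          exact hne2 rfl
        obtain ⟨rfl, rfl⟩ := (PCell.horiz.injEq _ _ _ _).mp hkey
        rw [if_pos rfl] at hne2
        rw [Finset.mem_Icc] at hk
        -- tmin σ' ≤ k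
        have htmin : K.tmin σ' ≤ k := by
          rw [hC] at hne2
          obtain ⟨τ', hτ', hne3⟩ := Finset.exists_ne_zero_of_sum_ne_zero hne2
          rw [Finset.mem_filter] at hτ'
          obtain ⟨h1, _, _, _⟩ := htS _ hτ'.1
          have h5 : K.bdry τ' σ' ≠ 0 := fun h0 => hne3 (by rw [h0, mul_zero])
          have h6 := (K.nest τ' σ' h5).1
          have := hτ'.2
          omega
        -- k + 1 ≤ tmax σ'
        have htmax : k + 1 ≤ K.tmax σ' := by
          have hsplit : (∑ τ' ∈ S, z τ' * K.bdry τ' σ')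
              = C σ' k + ∑ τ' ∈ S.filter (fun τ' => ¬ t τ' ≤ k), z τ' * K.bdry τ' σ' := by
            rw [hC]
            exact (Finset.sum_filter_add_sum_filter_not S _ _).symm
          by_cases hT : (∑ τ' ∈ S, z τ' * K.bdry τ' σ') ≠ 0
          · -- total sum nonzero
            have hzd : bd K z σ' = (∑ τ' ∈ S, z τ' * K.bdry τ' σ')
                + ∑ τ' ∈ z.support.filter
                    (fun τ' => ¬(K.tmin τ' ≤ d ∧ b ≤ K.tmax τ')), z τ' * K.bdry τ' σ' := by
              rw [bd_eval, hS]
              exact (Finset.sum_filter_add_sum_filter_not z.support _ _).symm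
            by_cases hbz : bd K z σ' ≠ 0
            · have := Hd σ' hbz
              omega
            · push_neg at hbz
              rw [hbz] at hzd
              have hoff : (∑ τ' ∈ z.support.filter
                  (fun τ' => ¬(K.tmin τ' ≤ d ∧ b ≤ K.tmax τ')), z τ' * K.bdry τ' σ') ≠ 0 := by
                intro h0
                rw [h0, add_zero] at hzd
                exact hT hzd.symm
              obtain ⟨τ', hτ', hne3⟩ := Finset.exists_ne_zero_of_sum_ne_zero hoff
              rw [Finset.mem_filter, Finsupp.mem_support_iff] at hτ'
              have h5 : K.bdry τ' σ' ≠ 0 := fun h0 => hne3 (by rw [h0, mul_zero])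
              have h6 := (K.nest τ' σ' h5).2
              have h7 := Hb τ' hτ'.1
              have h8 := K.tmin_lt_tmax τ'
              have h9 : ¬(K.tmin τ' ≤ d ∧ b ≤ K.tmax τ') := hτ'.2
              have h10 := (K.nest τ' σ' h5).1
              omega
          · push_neg at hT
            have hrest : (∑ τ' ∈ S.filter (fun τ' => ¬ t τ' ≤ k), z τ' * K.bdry τ' σ') ≠ 0 := by
              intro h0
              rw [hT, h0, add_zero] at hsplit
              exact hne2 hsplit.symm
            obtain ⟨τ', hτ', hne3⟩ := Finset.exists_ne_zero_of_sum_ne_zero hrest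
            rw [Finset.mem_filter] at hτ'
            obtain ⟨_, h2, _, _⟩ := htS _ hτ'.1
            have h5 : K.bdry τ' σ' ≠ 0 := fun h0 => hne3 (by rw [h0, mul_zero])
            have h6 := (K.nest τ' σ' h5).2
            have h7 := hτ'.2
            omega
        have h5 : K.tmax σ' ≤ n := K.tmax_le σ'
        exact ⟨⟨htmin, htmax⟩, hk.1, by omega⟩
  · -- the boundary is supported on `K̂_d^{n+1}`
    intro x hx
    rw [hzAB, pbd_eq, map_add] at hx
    have hpA : extC (pcellBd K) A = ∑ τ' ∈ S, z τ' • pcellBd K (PCell.vert τ' (t τ')) := by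
      rw [hA, map_sum]
      apply Finset.sum_congr rfl
      intro τ' _
      rw [extC_single]
    have hpB : extC (pcellBd K) B = ∑ σ' : K.Cell, ∑ k ∈ Finset.Icc b (d - 1),
        C σ' k • pcellBd K (PCell.horiz σ' k) := by
      rw [hB, map_sum]
      apply Finset.sum_congr rfl
      intro σ' _
      rw [map_sum]
      apply Finset.sum_congr rfl
      intro k _
      rw [extC_single]
    rw [hpA, hpB, Finsupp.add_apply, Finsupp.finset_sum_apply, Finsupp.finset_sum_apply] at hx
    cases x with
    | horiz ρ m =>
        exfalso
        apply hx
        have e1 : (∑ τ' ∈ S, (z τ' • pcellBd K (PCell.vert τ' (t τ'))) (PCell.horiz ρ m)) = 0 := by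
          apply Finset.sum_eq_zero
          intro τ' _
          rw [Finsupp.smul_apply, pcellBd_vert_apply_horiz, smul_zero]
        have e2 : (∑ σ' : K.Cell, (∑ k ∈ Finset.Icc b (d-1),
            C σ' k • pcellBd K (PCell.horiz σ' k)) (PCell.horiz ρ m)) = 0 := by
          have e3 : ∀ σ' : K.Cell, (∑ k ∈ Finset.Icc b (d-1),
              C σ' k • pcellBd K (PCell.horiz σ' k)) (PCell.horiz ρ m)
                = if m ∈ Finset.Icc b (d-1) then -(C σ' m * K.bdry σ' ρ) else 0 := by
            intro σ'
            rw [Finsupp.finset_sum_apply]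
            have e4 : ∀ k ∈ Finset.Icc b (d-1),
                (C σ' k • pcellBd K (PCell.horiz σ' k)) (PCell.horiz ρ m)
                  = if k = m then -(C σ' m * K.bdry σ' ρ) else 0 := by
              intro k _
              rw [Finsupp.smul_apply, pcellBd_horiz_apply_horiz, smul_eq_mul]
              by_cases hkm : k = m
              · rw [if_pos hkm, if_pos hkm, hkm]; ring
              · rw [if_neg hkm, if_neg hkm]; ring
            rw [Finset.sum_congr rfl e4, Finset.sum_ite_eq']
          rw [Finset.sum_congr rfl (fun σ' _ => e3 σ')]
          by_cases hm : m ∈ Finset.Icc b (d-1)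
          · simp only [hm, if_true]
            rw [Finset.sum_neg_distrib, neg_eq_zero]
            -- ∑_{σ'} C σ' m * bdry σ' ρ = 0 by ∂∂ = 0
            have e5 : ∀ σ' : K.Cell, C σ' m * K.bdry σ' ρ
                = ∑ τ' ∈ S.filter (fun τ' => t τ' ≤ m),
                    z τ' * (K.bdry τ' σ' * K.bdry σ' ρ) := by
              intro σ'
              rw [hC]
              rw [Finset.sum_mul]
              apply Finset.sum_congr rfl
              intro τ' _
              ring
            rw [Finset.sum_congr rfl (fun σ' _ => e5 σ')]
            rw [Finset.sum_comm]
            apply Finset.sum_eq_zero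
            intro τ' _
            rw [← Finset.mul_sum]
            have e6 : (∑ σ' : K.Cell, K.bdry τ' σ' * K.bdry σ' ρ) = 0 := by
              rw [← bd_eval_univ, bd_bdry, Finsupp.coe_zero, Pi.zero_apply]
            rw [e6, mul_zero]
          · simp only [hm, if_false]
            exact Finset.sum_const_zero
        rw [e1, e2, add_zero]
    | vert ρ m =>
        -- evaluate the two sums
        have e1 : ∀ τ' ∈ S, (z τ' • pcellBd K (PCell.vert τ' (t τ'))) (PCell.vert ρ m)
            = if t τ' = m then z τ' * K.bdry τ' ρ else 0 := by
          intro τ' _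
          rw [Finsupp.smul_apply, pcellBd_vert_apply_vert, smul_eq_mul, mul_ite, mul_zero]
        have e3 : ∀ σ' : K.Cell, (∑ k ∈ Finset.Icc b (d-1),
            C σ' k • pcellBd K (PCell.horiz σ' k)) (PCell.vert ρ m)
              = if σ' = ρ then
                  ((if m - 1 ∈ Finset.Icc b (d-1) then C ρ (m-1) else 0)
                    - (if m ∈ Finset.Icc b (d-1) then C ρ m else 0)) else 0 := by
          intro σ'
          rw [Finsupp.finset_sum_apply]
          by_cases hσρ : σ' = ρ
          · subst hσρ
            rw [if_pos rfl]
            have e4 : ∀ k ∈ Finset.Icc b (d-1),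
                (C σ' k • pcellBd K (PCell.horiz σ' k)) (PCell.vert σ' m)
                  = (if k = m - 1 then C σ' k else 0) - (if k = m then C σ' k else 0) := by
              intro k _
              rw [Finsupp.smul_apply, pcellBd_horiz_apply_vert, smul_eq_mul]
              by_cases h1 : k = m - 1
              · rw [if_pos ⟨rfl, by omega⟩, if_neg (fun h => by omega), if_pos h1,
                  if_neg (by omega)]
                ring
              · rw [if_neg (fun h => h1 (by omega)), if_neg h1]
                by_cases h2 : k = m
                · rw [if_pos ⟨rfl, h2⟩, if_pos h2]; ring
                · rw [if_neg (fun h => h2 h.2), if_neg h2]; ring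
            rw [Finset.sum_congr rfl e4, Finset.sum_sub_distrib, Finset.sum_ite_eq',
              Finset.sum_ite_eq']
          · rw [if_neg hσρ]
            apply Finset.sum_eq_zero
            intro k _
            rw [Finsupp.smul_apply, pcellBd_horiz_apply_vert, smul_eq_mul,
              if_neg (fun h => hσρ h.1), if_neg (fun h => hσρ h.1), sub_zero, mul_zero]
        rw [Finset.sum_congr rfl e1, Finset.sum_congr rfl (fun σ' _ => e3 σ'),
          Finset.sum_ite_eq'] at hx
        simp only [Finset.mem_univ, if_true] at hx
        by_cases hmd : m = d
        · -- the coefficient is the full sum over `S`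
          have hc1 : m - 1 ∈ Finset.Icc b (d-1) := by rw [Finset.mem_Icc]; omega
          have hc2 : m ∉ Finset.Icc b (d-1) := by rw [Finset.mem_Icc]; omega
          rw [if_pos hc1, if_neg hc2, sub_zero, hCind, ← Finset.sum_add_distrib] at hx
          have hTot : (∑ τ' ∈ S, ((if t τ' = m then z τ' * K.bdry τ' ρ else 0)
              + (if t τ' ≤ m - 1 then z τ' * K.bdry τ' ρ else 0)))
                = ∑ τ' ∈ S, z τ' * K.bdry τ' ρ := by
            apply Finset.sum_congr rfl
            intro τ' hτ'
            obtain ⟨_, _, h3, h4⟩ := htS τ' hτ'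
            by_cases h : t τ' = m
            · rw [if_pos h, if_neg (by omega), add_zero]
            · rw [if_neg h, if_pos (by omega), zero_add]
          rw [hTot] at hx
          have htminρ : K.tmin ρ ≤ d := by
            obtain ⟨τ', hτ', hne⟩ := Finset.exists_ne_zero_of_sum_ne_zero hx
            have h5 : K.bdry τ' ρ ≠ 0 := fun h0 => hne (by rw [h0, mul_zero])
            have h6 := (K.nest τ' ρ h5).1
            have := (hmemS τ' hτ').2.1
            omega
          have htmaxρ : d ≤ K.tmax ρ := by
            have hzd : bd K z ρ = (∑ τ' ∈ S, z τ' * K.bdry τ' ρ)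
                + ∑ τ' ∈ z.support.filter
                    (fun τ' => ¬(K.tmin τ' ≤ d ∧ b ≤ K.tmax τ')), z τ' * K.bdry τ' ρ := by
              rw [bd_eval, hS]
              exact (Finset.sum_filter_add_sum_filter_not z.support _ _).symm
            by_cases hbz : bd K z ρ ≠ 0
            · exact Hd ρ hbz
            · push_neg at hbz
              rw [hbz] at hzd
              have hoff : (∑ τ' ∈ z.support.filter
                  (fun τ' => ¬(K.tmin τ' ≤ d ∧ b ≤ K.tmax τ')), z τ' * K.bdry τ' ρ) ≠ 0 := by
                intro h0
                rw [h0, add_zero] at hzd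
                exact hx hzd.symm
              obtain ⟨τ', hτ', hne3⟩ := Finset.exists_ne_zero_of_sum_ne_zero hoff
              rw [Finset.mem_filter, Finsupp.mem_support_iff] at hτ'
              have h5 : K.bdry τ' ρ ≠ 0 := fun h0 => hne3 (by rw [h0, mul_zero])
              have h6 := (K.nest τ' ρ h5).2
              have h7 := Hb τ' hτ'.1
              have h8 := K.tmin_lt_tmax τ'
              have h9 := hτ'.2
              omega
          have h5 : K.tmax ρ ≤ n := K.tmax_le ρ
          rw [hmd]
          exact ⟨⟨htminρ, htmaxρ⟩, le_refl _, by omega⟩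
        · -- away from `d` the coefficient vanishes
          exfalso
          apply hx
          by_cases hm1 : m - 1 ∈ Finset.Icc b (d-1)
          · by_cases hm2 : m ∈ Finset.Icc b (d-1)
            · have hb1 := Finset.mem_Icc.mp hm1
              rw [if_pos hm1, if_pos hm2, hCind ρ (m-1), hCind ρ m,
                ← Finset.sum_sub_distrib, ← Finset.sum_add_distrib]
              apply Finset.sum_eq_zero
              intro τ' hτ'
              obtain ⟨_, _, h3, h4⟩ := htS τ' hτ'
              by_cases h : t τ' = m
              · rw [if_pos h, if_neg (by omega), if_pos (by omega)]; ring
              · by_cases h' : t τ' ≤ m - 1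
                · rw [if_neg h, if_pos h', if_pos (by omega)]; ring
                · rw [if_neg h, if_neg h', if_neg (by omega)]; ring
            · have hb1 := Finset.mem_Icc.mp hm1
              have hb2 : ¬(b ≤ m ∧ m ≤ d - 1) := fun h => hm2 (Finset.mem_Icc.mpr h)
              exact absurd (by omega : m = d) hmd
          · by_cases hm2 : m ∈ Finset.Icc b (d-1)
            · have hb2 := Finset.mem_Icc.mp hm2
              have hb1 : ¬(b ≤ m - 1 ∧ m - 1 ≤ d - 1) := fun h => hm1 (Finset.mem_Icc.mpr h)
              rw [if_neg hm1, if_pos hm2, hCind ρ m, zero_sub,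
                ← Finset.sum_neg_distrib, ← Finset.sum_add_distrib]
              apply Finset.sum_eq_zero
              intro τ' hτ'
              obtain ⟨_, _, h3, h4⟩ := htS τ' hτ'
              by_cases h : t τ' = m
              · rw [if_pos h, if_pos (by omega)]; ring
              · rw [if_neg h, if_neg (by omega)]; ring
            · have hb1 : ¬(b ≤ m - 1 ∧ m - 1 ≤ d - 1) := fun h => hm1 (Finset.mem_Icc.mpr h)
              have hb2 : ¬(b ≤ m ∧ m ≤ d - 1) := fun h => hm2 (Finset.mem_Icc.mpr h)
              rw [if_neg hm1, if_neg hm2, sub_self, add_zero]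
              apply Finset.sum_eq_zero
              intro τ' hτ'
              obtain ⟨_, _, h3, h4⟩ := htS τ' hτ'
              rw [if_neg (by omega : ¬ t τ' = m)]

end Lift

section Main

variable (K : DeltaComplex F n) (O : ConeOrder K)
variable (R V : CCell K.Cell → (CCell K.Cell →₀ F))

lemma cbd_add (a b : CCell K.Cell →₀ F) : cbd K (a + b) = cbd K a + cbd K b := by
  rw [cbd_eq, cbd_eq, cbd_eq, map_add]

lemma bd_add (a b : K.Cell →₀ F) : bd K (a + b) = bd K a + bd K b := by
  rw [bd_eq, bd_eq, bd_eq, map_add]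

lemma basePart_baseOf (w : K.Cell →₀ F) : basePart K (baseOf K w) = w := by
  rw [basePart_eq]
  have h : (extC (fun x => match x with
      | CCell.base σ => Finsupp.single σ (1 : F)
      | CCell.omega => 0
      | CCell.cone _ => 0)).comp (baseOf K) = (LinearMap.id : (K.Cell →₀ F) →ₗ[F] _) := by
    apply Finsupp.lhom_ext
    intro x a
    rw [LinearMap.comp_apply, baseOf_single, extC_single]
    simp [Finsupp.smul_single]
  exact LinearMap.congr_fun h w

lemma basePart_coneOf (w : K.Cell →₀ F) : basePart K (coneOf K w) = 0 := by
  rw [basePart_eq]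
  have h : (extC (fun x => match x with
      | CCell.base σ => Finsupp.single σ (1 : F)
      | CCell.omega => 0
      | CCell.cone _ => 0)).comp (coneOf K) = (0 : (K.Cell →₀ F) →ₗ[F] _) := by
    apply Finsupp.lhom_ext
    intro x a
    rw [LinearMap.comp_apply, coneOf_single, extC_single]
    simp
  exact LinearMap.congr_fun h w

lemma basePart_omegaOf (w : K.Cell →₀ F) : basePart K (omegaOf K w) = 0 := by
  rw [basePart_eq]
  have h : (extC (fun x => match x with
      | CCell.base σ => Finsupp.single σ (1 : F)
      | CCell.omega => 0
      | CCell.cone _ => 0)).comp (omegaOf K) = (0 : (K.Cell →₀ F) →ₗ[F] _) := by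
    apply Finsupp.lhom_ext
    intro x a
    rw [LinearMap.comp_apply, omegaOf_single, map_smul]
    by_cases hd : K.dim x = 0
    · rw [if_pos hd, extC_single]; simp
    · rw [if_neg hd, map_zero]; simp
  exact LinearMap.congr_fun h w

lemma basePart_sub (a b : CCell K.Cell →₀ F) :
    basePart K (a - b) = basePart K a - basePart K b := by
  rw [basePart_eq, basePart_eq, basePart_eq, map_sub]

/-- The cone coefficients of `R τ̄ = ∂(ω∗v)` are minus the boundary of `v`. -/
lemma R_cone_eval (hRV : IsReduction K O R V) (τ : K.Cell) (v : K.Cell →₀ F)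
    (hV : V (CCell.cone τ) = coneOf K v) (ρ : K.Cell) :
    R (CCell.cone τ) (CCell.cone ρ) = -(bd K v ρ) := by
  rw [hRV.rdv, hV, cbd_coneOf, Finsupp.sub_apply, Finsupp.sub_apply, coneOf_apply_cone]
  have h1 : baseOf K v (CCell.cone ρ) = 0 := by
    by_contra h
    obtain ⟨ρ', hρ', _⟩ := baseOf_support K v _ h
    exact nomatch hρ'
  have h2 : omegaOf K v (CCell.cone ρ) = 0 := by
    by_contra h
    exact nomatch (omegaOf_support K v _ h)
  rw [h1, h2]
  ring

/-- No representative coming from `K̂_{b+1}`: otherwise an earlier column would share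
the pivot `cone σ`. -/
lemma no_earlier_birth (hRV : IsReduction K O R V) (σ τ : K.Cell) (b d : ℤ)
    (hd : K.tmax σ = d) (hb : K.tmax τ = b) (hbd : b < d)
    (hlow : IsLow K O (R (CCell.cone τ)) (CCell.cone σ))
    (v α β γ : K.Cell →₀ F) (hV : V (CCell.cone τ) = coneOf K v)
    (hα : SuppOn α (fun ρ => b + 1 ≤ K.tmax ρ))
    (hγ : SuppOn γ (fun ρ => d ≤ K.tmax ρ))
    (hvd : v = α + bd K β + γ) : False := by
  classical
  set c₀ : CCell K.Cell →₀ F := coneOf K α + coneOf K γ + baseOf K β with hc₀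
  have hsupp : ∀ x, c₀ x ≠ 0 → O.pos x < O.pos (CCell.cone τ) := by
    intro x hx
    rw [hc₀, Finsupp.add_apply, Finsupp.add_apply] at hx
    by_cases h1 : coneOf K α x ≠ 0
    · obtain ⟨ρ, rfl, hρ⟩ := coneOf_support K α x h1
      have := hα ρ hρ
      exact O.cone_lt_cone ρ τ (by omega)
    · push_neg at h1
      rw [h1, zero_add] at hx
      by_cases h2 : coneOf K γ x ≠ 0
      · obtain ⟨ρ, rfl, hρ⟩ := coneOf_support K γ x h2
        have := hγ ρ hρ
        exact O.cone_lt_cone ρ τ (by omega)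
      · push_neg at h2
        rw [h2, zero_add] at hx
        obtain ⟨ρ, rfl, _⟩ := baseOf_support K β x hx
        exact lt_trans (O.base_lt_omega ρ) (O.omega_lt_cone τ)
  have hbdv : bd K v = bd K α + bd K γ := by
    rw [hvd, bd_add, bd_add, bd_bd, add_zero]
  have hL : cbd K c₀ = R (CCell.cone τ) + (omegaOf K v - omegaOf K (α + γ)) := by
    rw [hc₀, cbd_add, cbd_add, cbd_coneOf, cbd_coneOf, cbd_baseOf]
    rw [hRV.rdv, hV, cbd_coneOf, hbdv]
    have hbase : baseOf K v = baseOf K α + baseOf K γ + baseOf K (bd K β) := by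
      rw [hvd, map_add, map_add]; abel
    have hω : omegaOf K (α + γ) = omegaOf K α + omegaOf K γ := map_add _ _ _
    rw [hbase, hω, map_add]
    abel
  have hE : ∀ x, (omegaOf K v - omegaOf K (α + γ)) x ≠ 0 → x = CCell.omega := by
    intro x hx
    rw [Finsupp.sub_apply] at hx
    by_cases h1 : omegaOf K v x ≠ 0
    · exact omegaOf_support K v x h1
    · push_neg at h1
      rw [h1, zero_sub, neg_ne_zero] at hx
      exact omegaOf_support K _ x hx
  have hLσ : cbd K c₀ (CCell.cone σ) ≠ 0 := by
    rw [hL, Finsupp.add_apply]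
    have h2 : (omegaOf K v - omegaOf K (α + γ)) (CCell.cone σ) = 0 := by
      by_contra h
      exact nomatch (hE _ h)
    rw [h2, add_zero]
    exact hlow.1
  have hLbound : ∀ x, cbd K c₀ x ≠ 0 → O.pos x ≤ O.pos (CCell.cone σ) := by
    intro x hx
    rw [hL, Finsupp.add_apply] at hx
    by_cases h1 : R (CCell.cone τ) x ≠ 0
    · exact hlow.2 x h1
    · push_neg at h1
      rw [h1, zero_add] at hx
      rw [hE x hx]
      exact le_of_lt (O.omega_lt_cone σ)
  rcases span_low K O R V hRV (O.pos (CCell.cone τ)) c₀ hsupp with h0 | ⟨τ', ς, h1, h2, h3⟩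
  · exact hLσ (by rw [h0]; rfl)
  · have hp1 : O.pos ς ≤ O.pos (CCell.cone σ) := hLbound ς h3.1
    have hp2 : O.pos (CCell.cone σ) ≤ O.pos ς := h3.2 _ hLσ
    have hςσ : ς = CCell.cone σ := O.inj (le_antisymm hp1 hp2)
    have hne : CCell.cone τ ≠ τ' := fun h => absurd (h ▸ h1) (lt_irrefl _)
    exact hRV.reduced (CCell.cone τ) τ' (CCell.cone σ) hne hlow (hςσ ▸ h2)

/-- No representative with boundary in `K̂_{d+1}`: otherwise the pivot entry of `R τ̄`
would vanish. -/
lemma no_later_death (hRV : IsReduction K O R V) (σ τ : K.Cell) (b d : ℤ)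
    (hd : K.tmax σ = d) (hb : K.tmax τ = b) (hbd : b < d)
    (hlow : IsLow K O (R (CCell.cone τ)) (CCell.cone σ))
    (v α β γ : K.Cell →₀ F) (hV : V (CCell.cone τ) = coneOf K v)
    (hdα : SuppOn (bd K α) (fun ρ => d + 1 ≤ K.tmax ρ))
    (hγ : SuppOn γ (fun ρ => d ≤ K.tmax ρ))
    (hvd : v = α + bd K β + γ) : False := by
  have hbdv : bd K v = bd K α + bd K γ := by
    rw [hvd, bd_add, bd_add, bd_bd, add_zero]
  have h1 : bd K α σ = 0 := by
    by_contra h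
    have := hdα σ h
    omega
  have h2 : bd K γ σ = 0 := by
    rw [bd_eval]
    apply Finset.sum_eq_zero
    intro τ' hτ'
    by_cases hB : K.bdry τ' σ = 0
    · rw [hB, mul_zero]
    · exfalso
      have h3 := (K.nest τ' σ hB).2
      have h4 := hγ τ' (Finsupp.mem_support_iff.mp hτ')
      omega
  have h5 : R (CCell.cone τ) (CCell.cone σ) = 0 := by
    rw [R_cone_eval K O R V hRV τ v hV σ, hbdv, Finsupp.add_apply, h1, h2, add_zero,
      neg_zero]
  exact hlow.1 h5

/-- Transfer of supports through the projection. -/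
lemma projL_supp (c : PCell K.Cell →₀ F) (i j : ℤ) (hc : SuppOn c (inSub K i j)) :
    SuppOn (projL K c) (fun ρ => i ≤ K.tmax ρ) := by
  intro ρ hρ
  rw [projL] at hρ
  obtain ⟨x, hx, hfx⟩ := extC_support _ c ρ hρ
  cases x with
  | vert ρ' t0 =>
      have hρ' : ρ' = ρ := by
        rw [Finsupp.single_apply] at hfx
        by_contra h
        rw [if_neg h] at hfx
        exact hfx rfl
      subst hρ'
      have hmem := hc _ hx
      obtain ⟨⟨_, hh2⟩, hh3, _⟩ := hmem
      omega
  | horiz _ _ => exact absurd rfl hfx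

end Main

/-- Claim (relative pairs lift to apex representatives, lazy reduction): assume `R = DV`
is obtained by the lazy reduction and let `(σ̄,τ̄)` be a persistence pair of cone simplices
with `max σ = d > b = max τ` (`low R[τ̄] = σ̄`). Then the chain `ẑ` produced by
`Lift-Cycle(R[τ̄] ∩ K, (b,d), 0)` is a relative cycle of `K̂[b,d)` and an apex
representative: `[ẑ]` lies neither in the image of `H(K̂[b+1,d)) → H(K̂[b,d))` nor in the
image of `H(K̂[b,d+1)) → H(K̂[b,d))`. -/
theorem statement_15 {F : Type} [Field F] {n : ℤ} (K : DeltaComplex F n) (O : ConeOrder K)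
    (R V : CCell K.Cell → (CCell K.Cell →₀ F)) (hRV : IsReduction K O R V)
    (hlazy : IsLazyReduction K O R V)
    (σ τ : K.Cell) (b d : ℤ) (hd : K.tmax σ = d) (hb : K.tmax τ = b) (hbd : b < d)
    (hlow : IsLow K O (R (CCell.cone τ)) (CCell.cone σ))
    (t : K.Cell → ℤ) (ht : ValidTimes K (basePart K (R (CCell.cone τ))) b d t) :
    RelCycle K (inSub K b (n + 1)) (inSub K d (n + 1))
      (liftCycle K (basePart K (R (CCell.cone τ))) b d 0 t) ∧
    ¬ InImg K (inSub K (b + 1) (n + 1)) (inSub K d (n + 1))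
        (inSub K b (n + 1)) (inSub K d (n + 1))
        (liftCycle K (basePart K (R (CCell.cone τ))) b d 0 t) ∧
    ¬ InImg K (inSub K b (n + 1)) (inSub K (d + 1) (n + 1))
        (inSub K b (n + 1)) (inSub K d (n + 1))
        (liftCycle K (basePart K (R (CCell.cone τ))) b d 0 t) := by
  classical
  -- the coefficient column is supported on cone cells
  have hVsupp : ∀ x, V (CCell.cone τ) x ≠ 0 → ∃ ρ', x = CCell.cone ρ' :=
    V_cone_supp K O R V hRV hlazy (O.pos (CCell.cone τ)) τ rfl σ hlow
  set v : K.Cell →₀ F := conePull K (V (CCell.cone τ)) with hv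
  have hV : V (CCell.cone τ) = coneOf K v := by
    ext x
    cases x with
    | base ρ =>
        have h1 : V (CCell.cone τ) (CCell.base ρ) = 0 := by
          by_contra h
          obtain ⟨ρ', h'⟩ := hVsupp _ h
          exact nomatch h'
        have h2 : coneOf K v (CCell.base ρ) = 0 := by
          by_contra h
          obtain ⟨ρ', h', _⟩ := coneOf_support K v _ h
          exact nomatch h'
        rw [h1, h2]
    | omega =>
        have h1 : V (CCell.cone τ) CCell.omega = 0 := by
          by_contra h
          obtain ⟨ρ', h'⟩ := hVsupp _ h
          exact nomatch h'
        have h2 : coneOf K v CCell.omega = 0 := by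
          by_contra h
          obtain ⟨ρ', h', _⟩ := coneOf_support K v _ h
          exact nomatch h'
        rw [h1, h2]
    | cone ρ => rw [coneOf_apply_cone, hv, conePull_apply]
  have hz : basePart K (R (CCell.cone τ)) = v := by
    rw [hRV.rdv, hV, cbd_coneOf, basePart_sub, basePart_sub, basePart_baseOf,
      basePart_coneOf, basePart_omegaOf, sub_zero, sub_zero]
  have Hb : ∀ ρ, v ρ ≠ 0 → b ≤ K.tmax ρ := by
    intro ρ hρ
    rw [hv, conePull_apply] at hρ
    have hpos := hRV.upper (CCell.cone τ) _ hρ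
    by_contra h
    push_neg at h
    exact absurd hpos (not_le.mpr (O.cone_lt_cone τ ρ (by omega)))
  have Hd : ∀ ρ, bd K v ρ ≠ 0 → d ≤ K.tmax ρ := by
    intro ρ hρ
    have hR : R (CCell.cone τ) (CCell.cone ρ) ≠ 0 := by
      rw [R_cone_eval K O R V hRV τ v hV ρ]
      exact neg_ne_zero.mpr hρ
    have hpos := hlow.2 _ hR
    by_contra h
    push_neg at h
    exact absurd hpos (not_le.mpr (O.cone_lt_cone σ ρ (by omega)))
  rw [hz] at ht ⊢
  -- projection of the lifted cycle back to `K`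
  have hproj : projL K (liftCycle K v b d 0 t)
      = ∑ τ' ∈ v.support.filter (fun τ' => K.tmin τ' ≤ d ∧ b ≤ K.tmax τ'),
          Finsupp.single τ' (v τ') := by
    rw [liftCycle_eq K v b d hbd t, map_add]
    have hA : projL K (∑ τ' ∈ v.support.filter
        (fun τ' => K.tmin τ' ≤ d ∧ b ≤ K.tmax τ'),
          Finsupp.single (PCell.vert τ' (t τ')) (v τ'))
        = ∑ τ' ∈ v.support.filter (fun τ' => K.tmin τ' ≤ d ∧ b ≤ K.tmax τ'),
            Finsupp.single τ' (v τ') := by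
      rw [map_sum]
      exact Finset.sum_congr rfl fun τ' _ => projL_single_vert K τ' _ _
    have hB : projL K (∑ σ' : K.Cell, ∑ k ∈ Finset.Icc b (d - 1),
        Finsupp.single (PCell.horiz σ' k)
          (∑ τ' ∈ (v.support.filter
              (fun τ' => K.tmin τ' ≤ d ∧ b ≤ K.tmax τ')).filter (fun τ' => t τ' ≤ k),
            v τ' * K.bdry τ' σ')) = 0 := by
      rw [map_sum]
      apply Finset.sum_eq_zero
      intro σ' _
      rw [map_sum]
      apply Finset.sum_eq_zero
      intro k _
      exact projL_single_horiz K σ' k _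
    rw [hA, hB, add_zero]
  set w : K.Cell →₀ F := ∑ τ' ∈ v.support.filter
      (fun τ' => ¬(K.tmin τ' ≤ d ∧ b ≤ K.tmax τ')), Finsupp.single τ' (v τ') with hw
  have hvw : v = projL K (liftCycle K v b d 0 t) + w := by
    rw [hproj, hw]
    have hvs : (∑ τ' ∈ v.support, Finsupp.single τ' (v τ')) = v := Finsupp.sum_single v
    conv_lhs => rw [← hvs]
    exact (Finset.sum_filter_add_sum_filter_not v.support _ _).symm
  have hwsupp : SuppOn w (fun ρ => d ≤ K.tmax ρ) := by
    intro ρ hρ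
    rw [hw, Finsupp.finset_sum_apply] at hρ
    obtain ⟨τ', hτ', hne⟩ := Finset.exists_ne_zero_of_sum_ne_zero hρ
    rw [Finset.mem_filter, Finsupp.mem_support_iff] at hτ'
    have hτρ : τ' = ρ := by
      rw [Finsupp.single_apply] at hne
      by_contra h
      rw [if_neg h] at hne
      exact hne rfl
    subst hτρ
    have h7 := Hb τ' hτ'.1
    have h8 := K.tmin_lt_tmax τ'
    have h9 := hτ'.2
    omega
  refine ⟨lift_relcycle K v b d hbd Hb Hd t ht, ?_, ?_⟩
  · rintro ⟨αh, βh, γh, ⟨hαA, hαB⟩, hβ, hγ, heq⟩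
    have hα := projL_supp K αh (b + 1) (n + 1) hαA
    have hγ0 := projL_supp K γh d (n + 1) hγ
    have hdecomp : v = projL K αh + bd K (projL K βh) + (projL K γh + w) := by
      calc v = projL K (liftCycle K v b d 0 t) + w := hvw
        _ = projL K (αh + pbd K βh + γh) + w := by rw [← heq]
        _ = projL K αh + bd K (projL K βh) + (projL K γh + w) := by
            rw [map_add, map_add, projL_pbd]
            abel
    refine no_earlier_birth K O R V hRV σ τ b d hd hb hbd hlow v _ _ _ hV hα ?_ hdecomp
    intro ρ hρ
    rw [Finsupp.add_apply] at hρ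
    by_cases h1 : projL K γh ρ ≠ 0
    · exact hγ0 ρ h1
    · push_neg at h1
      rw [h1, zero_add] at hρ
      exact hwsupp ρ hρ
  · rintro ⟨αh, βh, γh, ⟨hαA, hαB⟩, hβ, hγ, heq⟩
    have hdα : SuppOn (bd K (projL K αh)) (fun ρ => d + 1 ≤ K.tmax ρ) := by
      have := projL_supp K (pbd K αh) (d + 1) (n + 1) hαB
      rwa [projL_pbd] at this
    have hγ0 := projL_supp K γh d (n + 1) hγ
    have hdecomp : v = projL K αh + bd K (projL K βh) + (projL K γh + w) := by
      calc v = projL K (liftCycle K v b d 0 t) + w := hvw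
        _ = projL K (αh + pbd K βh + γh) + w := by rw [← heq]
        _ = projL K αh + bd K (projL K βh) + (projL K γh + w) := by
            rw [map_add, map_add, projL_pbd]
            abel
    refine no_later_death K O R V hRV σ τ b d hd hb hbd hlow v _ _ _ hV hdα ?_ hdecomp
    intro ρ hρ
    rw [Finsupp.add_apply] at hρ
    by_cases h1 : projL K γh ρ ≠ 0
    · exact hγ0 ρ h1
    · push_neg at h1
      rw [h1, zero_add] at hρ
      exact hwsupp ρ hρ
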